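/- Let x, y, z, w be the vertices of a convex quadrilateral in the plane (in this cyclic order), and let p be the intersection point of the diagonals xz and yw. Then p lies in all four disks D(x,y), D(y,z), D(z,w), D(w,x) after possibly relabeling, i.e., there exists a Hamiltonian cycle on the four points all of whose edge-disks contain p. -/

import Mathlib

open Real

/-- The closed disk with diameter segment `ab`. -/
def diskD (a b : EuclideanSpace ℝ (Fin 2)) : Set (EuclideanSpace ℝ (Fin 2)) :=
  Metric.closedBall (midpoint ℝ a b) (dist a b / 2)

lemma mem_diskD_iff (a b q : EuclideanSpace ℝ (Fin 2)) :
    q ∈ diskD a b ↔ inner ℝ (q - a) (q - b) ≤ (0 : ℝ) := by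
  rw [diskD, Metric.mem_closedBall, dist_eq_norm, dist_eq_norm]
  have h1 : q - midpoint ℝ a b = (2:ℝ)⁻¹ • ((q - a) + (q - b)) := by
    rw [midpoint_eq_smul_add, invOf_eq_inv]; module
  have h2 : a - b = ((q - b) - (q - a)) := by abel
  rw [h1, h2, norm_smul]
  have hn : ‖((2:ℝ)⁻¹)‖ = (2:ℝ)⁻¹ := by norm_num
  rw [hn]
  have k1 := norm_add_sq_real (q - a) (q - b)
  have k2 := norm_sub_sq_real (q - b) (q - a)
  have k3 := real_inner_comm (q - b) (q - a)
  constructor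
  · intro h
    nlinarith [norm_nonneg ((q-a)+(q-b)), norm_nonneg ((q-b)-(q-a))]
  · intro h
    have h' : ‖(q-a)+(q-b)‖ ≤ ‖(q-b)-(q-a)‖ := by
      nlinarith [norm_nonneg ((q-a)+(q-b)), norm_nonneg ((q-b)-(q-a))]
    linarith

/-- For a convex quadrilateral `x y z w` (in this cyclic order), the intersection
point `p` of the diagonals lies in all four disks of some Hamiltonian cycle on the
four vertices. -/
theorem convex_quadrilateral_diagonal_point_tverberg
    (x y z w p : EuclideanSpace ℝ (Fin 2))
    (hxy : x ≠ y) (hxz : x ≠ z) (hxw : x ≠ w) (hyz : y ≠ z) (hyw : y ≠ w) (hzw : z ≠ w)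
    (hp₁ : p ∈ segment ℝ x z) (hp₂ : p ∈ segment ℝ y w)
    (hpx : p ≠ x) (hpy : p ≠ y) (hpz : p ≠ z) (hpw : p ≠ w) :
    ∃ σ : Equiv.Perm (Fin 4),
      ∀ i : Fin 4, p ∈ diskD (![x, y, z, w] (σ i)) (![x, y, z, w] (σ (i + 1))) := by
  obtain ⟨a, b, ha, hb, hab, hP⟩ := hp₁
  obtain ⟨c, d, hc, hd, hcd, hQ⟩ := hp₂
  have hbne : b ≠ 0 := by
    rintro rfl; apply hpx; rw [← hP]; simp [show a = 1 by linarith]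
  have hane : a ≠ 0 := by
    rintro rfl; apply hpz; rw [← hP]; simp [show b = 1 by linarith]
  have hdne : d ≠ 0 := by
    rintro rfl; apply hpy; rw [← hQ]; simp [show c = 1 by linarith]
  have hcne : c ≠ 0 := by
    rintro rfl; apply hpw; rw [← hQ]; simp [show d = 1 by linarith]
  have ha' : 0 < a := lt_of_le_of_ne ha (Ne.symm hane)
  have hb' : 0 < b := lt_of_le_of_ne hb (Ne.symm hbne)
  have hc' : 0 < c := lt_of_le_of_ne hc (Ne.symm hcne)
  have hd' : 0 < d := lt_of_le_of_ne hd (Ne.symm hdne)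
  set u := x - p with hu
  set v := y - p with hv
  set α := a / b with hα
  set β := c / d with hβ
  have hα' : 0 < α := div_pos ha' hb'
  have hβ' : 0 < β := div_pos hc' hd'
  have hx' : p - x = -u := by rw [hu]; abel
  have hy' : p - y = -v := by rw [hv]; abel
  have hz' : p - z = α • u := by
    rw [hu, ← hP, hα]
    have h1 : a = 1 - b := by linarith
    subst h1
    match_scalars <;> field_simp <;> ring
  have hw' : p - w = β • v := by
    rw [hv, ← hQ, hβ]
    have h1 : c = 1 - d := by linarith
    subst h1
    match_scalars <;> field_simp <;> ring
  set C : ℝ := inner ℝ u v with hC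
  have e1 : inner ℝ (p - x) (p - y) = C := by
    rw [hx', hy', inner_neg_neg, hC]
  have e2 : inner ℝ (p - y) (p - w) = -(β * ‖v‖^2) := by
    rw [hy', hw', inner_neg_left, real_inner_smul_right, real_inner_self_eq_norm_sq]
  have e3 : inner ℝ (p - w) (p - z) = α * β * C := by
    rw [hw', hz', real_inner_smul_left, real_inner_smul_right, real_inner_comm, hC]; ring
  have e4 : inner ℝ (p - z) (p - x) = -(α * ‖u‖^2) := by
    rw [hz', hx', real_inner_smul_left, inner_neg_right, real_inner_self_eq_norm_sq]; ring
  have e5 : inner ℝ (p - x) (p - z) = -(α * ‖u‖^2) := by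
    rw [real_inner_comm]; exact e4
  have e6 : inner ℝ (p - z) (p - y) = -(α * C) := by
    rw [hz', hy', real_inner_smul_left, inner_neg_right, hC]; ring
  have e8 : inner ℝ (p - w) (p - x) = -(β * C) := by
    rw [hw', hx', real_inner_smul_left, inner_neg_right, real_inner_comm, hC]; ring
  have hu2 : (0:ℝ) ≤ ‖u‖^2 := sq_nonneg _
  have hv2 : (0:ℝ) ≤ ‖v‖^2 := sq_nonneg _
  clear_value u v α β C
  rcases le_or_gt C 0 with hCle | hCgt
  · -- cycle x, y, w, z
    refine ⟨Equiv.swap 2 3, ?_⟩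
    intro i
    have h1 : Equiv.swap (2:Fin 4) 3 i = ![0,1,3,2] i := by fin_cases i <;> decide
    have h2 : Equiv.swap (2:Fin 4) 3 (i+1) = ![1,3,2,0] i := by fin_cases i <;> decide
    rw [h1, h2]
    fin_cases i
    · show p ∈ diskD x y
      rw [mem_diskD_iff, e1]; exact hCle
    · show p ∈ diskD y w
      rw [mem_diskD_iff, e2]
      have := mul_nonneg hβ'.le hv2; linarith
    · show p ∈ diskD w z
      rw [mem_diskD_iff, e3]
      have : 0 ≤ α*β*(-C) := mul_nonneg (mul_pos hα' hβ').le (by linarith)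
      nlinarith
    · show p ∈ diskD z x
      rw [mem_diskD_iff, e4]
      have := mul_nonneg hα'.le hu2; linarith
  · -- cycle x, z, y, w
    refine ⟨Equiv.swap 1 2, ?_⟩
    intro i
    have h1 : Equiv.swap (1:Fin 4) 2 i = ![0,2,1,3] i := by fin_cases i <;> decide
    have h2 : Equiv.swap (1:Fin 4) 2 (i+1) = ![2,1,3,0] i := by fin_cases i <;> decide
    rw [h1, h2]
    fin_cases i
    · show p ∈ diskD x z
      rw [mem_diskD_iff, e5]
      have := mul_nonneg hα'.le hu2; linarith
    · show p ∈ diskD z y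
      rw [mem_diskD_iff, e6]
      have := mul_nonneg hα'.le hCgt.le; linarith
    · show p ∈ diskD y w
      rw [mem_diskD_iff, e2]
      have := mul_nonneg hβ'.le hv2; linarith
    · show p ∈ diskD w x
      rw [mem_diskD_iff, e8]
      have := mul_nonneg hβ'.le hCgt.le; linarith
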